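/- Let a be a real number with a ≥ −log 2, and set n = ⌊e^a⌋. Then the minimal cardinality of a finite set generating at level n equals ⌈(a + log 2)/log 3⌉ − 1_L(a), where 1_L is the characteristic function of the exceptional set L. -/

import Mathlib

open Classical

/-- A finite set `F ⊆ ℤ ∩ [-n, n]` *generates at level* `n` if every integer `x`
with `|x| ≤ n` can be written as `x = ∑_{j∈F} α(j)·j` for coefficients
`α(j) ∈ {-1,0,1}` whose total mass `∑ |α(j)·j|` is at most `n`. -/
def GeneratesAtLevel (n : ℤ) (F : Finset ℤ) : Prop :=
  (∀ j ∈ F, -n ≤ j ∧ j ≤ n) ∧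
  ∀ x : ℤ, |x| ≤ n →
    ∃ α : ℤ → ℤ, (∀ j ∈ F, α j = -1 ∨ α j = 0 ∨ α j = 1) ∧
      x = ∑ j ∈ F, α j * j ∧ (∑ j ∈ F, |α j * j|) ≤ n

/-- The exceptional set `L`. -/
def excL : Set ℝ :=
  {a | ∃ k : ℕ, (k : ℝ) * Real.log 3 < a + Real.log 2 ∧
    a + Real.log 2 < (k : ℝ) * Real.log 3 + Real.log (1 + (3 : ℝ) ^ (-(k : ℤ)))}

/-- for `a ≥ −log 2` and `n = ⌊e^a⌋`, the minimal cardinality of a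
set generating at level `n` equals `⌈(a + log 2)/log 3⌉ − 1_L(a)`. -/
lemma gen_zero : GeneratesAtLevel 0 ∅ := by
  refine ⟨by simp, fun x hx => ⟨fun _ => 0, by simp, ?_, by simp⟩⟩
  have hx0 : x = 0 := by simpa using abs_nonpos_iff.mp hx
  simp [hx0]

lemma gen_step {n' c : ℤ} {F' : Finset ℤ} (h : GeneratesAtLevel n' F')
    (hcF : c ∉ F') (s : ℤ) (hs : s = -1 ∨ s = 0 ∨ s = 1)
    {x : ℤ} (hy : |x - s*c| ≤ n') (hm : |s*c| ≤ c) :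
    ∃ α : ℤ → ℤ, (∀ j ∈ insert c F', α j = -1 ∨ α j = 0 ∨ α j = 1) ∧
      x = ∑ j ∈ insert c F', α j * j ∧ (∑ j ∈ insert c F', |α j * j|) ≤ n' + c := by
  obtain ⟨α, hα, hsum, hmass⟩ := h.2 (x - s*c) hy
  have hupd : ∀ j ∈ F', Function.update α c s j = α j :=
    fun j hj => Function.update_of_ne (fun h => hcF (by rwa [← h])) _ _
  refine ⟨Function.update α c s, ?_, ?_, ?_⟩
  · intro j hj
    rcases Finset.mem_insert.mp hj with rfl | hj
    · rw [Function.update_self]; exact hs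
    · rw [hupd j hj]; exact hα j hj
  · rw [Finset.sum_insert hcF, Function.update_self,
      Finset.sum_congr rfl (fun j hj => by rw [hupd j hj])]
    omega
  · rw [Finset.sum_insert hcF, Function.update_self,
      Finset.sum_congr rfl (fun j hj => by rw [hupd j hj])]
    omega

lemma gen_combine {n' c : ℤ} {F' : Finset ℤ} (h : GeneratesAtLevel n' F')
    (hc1 : 1 ≤ c) (hc2 : c ≤ 2*n'+1) (hcF : c ∉ F') :
    GeneratesAtLevel (n'+c) (insert c F') := by
  have hn' : 0 ≤ n' := by omega
  constructor
  · intro j hj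
    rcases Finset.mem_insert.mp hj with rfl | hj
    · omega
    · have := h.1 j hj; omega
  · intro x hx
    by_cases hsmall : |x| ≤ n'
    · exact gen_step h hcF 0 (by tauto) (by simpa using hsmall) (by simp; omega)
    · rcases le_or_gt 0 x with h0 | h0
      · refine gen_step h hcF 1 (by tauto) ?_ (by rw [one_mul, abs_of_nonneg]; omega)
        rw [abs_le] at hx hsmall ⊢; omega
      · refine gen_step h hcF (-1) (by tauto) ?_ ?_
        · rw [abs_le] at hx hsmall ⊢; omega
        · rw [neg_one_mul, abs_neg, abs_of_nonneg] <;> omega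

lemma gen_one : GeneratesAtLevel 1 {1} := by
  have := gen_combine gen_zero (c := 1) (by norm_num) (by norm_num) (by simp)
  simpa using this

lemma sum_pair' (f : ℤ → ℤ) :
    ∑ j ∈ ({1, 2} : Finset ℤ), f j = f 1 + f 2 :=
  Finset.sum_pair (by norm_num)

lemma gen_two : GeneratesAtLevel 2 {1, 2} := by
  constructor
  · intro j hj
    fin_cases hj <;> omega
  · intro x hx
    have hx' : -2 ≤ x ∧ x ≤ 2 := abs_le.mp hx
    have key : ∃ u v : ℤ, (u = -1 ∨ u = 0 ∨ u = 1) ∧ (v = -1 ∨ v = 0 ∨ v = 1) ∧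
        x = u + v*2 ∧ |u| + |v*2| ≤ 2 := by
      obtain ⟨h1, h2⟩ := hx'
      interval_cases x
      · exact ⟨0, -1, by norm_num⟩
      · exact ⟨-1, 0, by norm_num⟩
      · exact ⟨0, 0, by norm_num⟩
      · exact ⟨1, 0, by norm_num⟩
      · exact ⟨0, 1, by norm_num⟩
    obtain ⟨u, v, hu, hv, hsum, hmass⟩ := key
    refine ⟨fun j => if j = 2 then v else u, ?_, ?_, ?_⟩
    · intro j hj; fin_cases hj <;> simp [hu, hv]
    · rw [sum_pair']; norm_num; exact hsum
    · rw [sum_pair']; norm_num; simpa [abs_mul] using hmass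

lemma odd_pow3 (m : ℕ) : (3:ℤ)^m % 2 = 1 := by
  have : Odd ((3:ℤ)^m) := Odd.pow ⟨1, by ring⟩
  exact Int.odd_iff.mp this

lemma exists_gen : ∀ m : ℕ, ∀ n : ℤ, (3:ℤ)^m < 2*n+1 → 2*n+1 ≤ 3^(m+1) →
    ∃ F : Finset ℤ, F.card = m+1 ∧ GeneratesAtLevel n F := by
  intro m
  induction m with
  | zero =>
    intro n h1 h2
    norm_num at h1 h2
    have : n = 1 := by omega
    exact ⟨{1}, by simp, this ▸ gen_one⟩
  | succ m ih =>
    intro n h1 h2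
    by_cases hn2 : n = 2
    · have hm : m = 0 := by
        by_contra hm
        have : 2 ≤ m + 1 := by omega
        have h9 : (3:ℤ)^2 ≤ 3^(m+1) := pow_le_pow_right₀ (by norm_num) this
        norm_num at h9; omega
      subst hm hn2
      exact ⟨{1, 2}, by decide, gen_two⟩
    · -- main recursive case, n ≥ 3
      have hppos : (0:ℤ) < 3^m := pow_pos (by norm_num) m
      have hpodd := odd_pow3 m
      have hps : (3:ℤ)^(m+1) = 3*3^m := by ring
      have hpss : (3:ℤ)^(m+1+1) = 9*3^m := by ring
      rw [hps] at h1; rw [hpss] at h2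
      have hn3 : 3 ≤ n := by omega
      set n' : ℤ := (n+1)/3 with hn'
      have hdiv : 3*((n+1)/3) ≤ n+1 ∧ n+1 < 3*((n+1)/3)+3 := by omega
      have hb1 : (3:ℤ)^m < 2*n'+1 := by omega
      have hb2 : 2*n'+1 ≤ 3^(m+1) := by rw [hps]; omega
      obtain ⟨F', hcard, hgen⟩ := ih n' hb1 hb2
      have hn'c : n' < n - n' := by omega
      have hcF : (n - n') ∉ F' := fun hmem => absurd (hgen.1 _ hmem).2 (by omega)
      have hcomb := gen_combine hgen (c := n - n') (by omega) (by omega) hcF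
      refine ⟨insert (n - n') F', ?_, ?_⟩
      · rw [Finset.card_insert_of_notMem hcF, hcard]
      · have : n' + (n - n') = n := by ring
        rwa [this] at hcomb

lemma gen_lower {n : ℤ} {F : Finset ℤ} (h : GeneratesAtLevel n F) :
    2*n+1 ≤ 3^F.card := by
  classical
  set s : Finset ℤ := Finset.Icc (-n) n with hs
  set t := F.pi (fun _ => Finset.Icc (-1:ℤ) 1) with ht
  have hcard_le : s.card ≤ t.card := by
    apply Finset.card_le_card_of_injOn
      (fun x => fun j _ => if hx : |x| ≤ n then Classical.choose (h.2 x hx) j else 0)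
    · intro x hxs
      have hx : |x| ≤ n := by
        rw [hs, Finset.mem_coe, Finset.mem_Icc] at hxs; rw [abs_le]; exact hxs
      rw [ht, Finset.mem_coe, Finset.mem_pi]
      intro j hj
      simp only [dif_pos hx]
      have hspec := (Classical.choose_spec (h.2 x hx)).1 j hj
      rw [Finset.mem_Icc]
      rcases hspec with h' | h' | h' <;> simp [h']
    · intro x hxs y hys heq
      have hx : |x| ≤ n := by
        simp only [hs, Finset.coe_Icc, Set.mem_Icc] at hxs; rw [abs_le]; exact hxs
      have hy : |y| ≤ n := by
        simp only [hs, Finset.coe_Icc, Set.mem_Icc] at hys; rw [abs_le]; exact hys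
      have hxx := (Classical.choose_spec (h.2 x hx)).2.1
      have hyy := (Classical.choose_spec (h.2 y hy)).2.1
      rw [hxx, hyy]
      refine Finset.sum_congr rfl (fun j hj => ?_)
      have := congrFun (congrFun heq j) hj
      simp only [dif_pos hx, dif_pos hy] at this
      rw [this]
  have hscard : s.card = (2*n+1).toNat := by
    rw [hs, Int.card_Icc]; congr 1; ring
  have htcard : t.card = 3^F.card := by
    rw [ht, Finset.card_pi]
    have : ∀ j ∈ F, (Finset.Icc (-1:ℤ) 1).card = 3 := fun _ _ => by decide
    rw [Finset.prod_congr rfl this, Finset.prod_const]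
  rw [hscard, htcard] at hcard_le
  exact_mod_cast Int.toNat_le.mp hcard_le

lemma log3_pos : 0 < Real.log 3 := Real.log_pos (by norm_num)

lemma exp_shift (a : ℝ) : Real.exp (a + Real.log 2) = 2 * Real.exp a := by
  rw [Real.exp_add, Real.exp_log (by norm_num), mul_comm]

lemma exp_klog3 (k : ℕ) : Real.exp (k * Real.log 3) = 3^k := by
  rw [Real.exp_nat_mul, Real.exp_log (by norm_num)]

lemma conv1 (a : ℝ) (k : ℕ) :
    (k : ℝ) * Real.log 3 < a + Real.log 2 ↔ (3:ℝ)^k < 2 * Real.exp a := by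
  rw [← Real.exp_lt_exp, exp_klog3, exp_shift]

lemma conv2 (a : ℝ) (k : ℕ) :
    a + Real.log 2 < (k : ℝ) * Real.log 3 + Real.log (1 + (3 : ℝ) ^ (-(k : ℤ)))
      ↔ 2 * Real.exp a < 3^k + 1 := by
  rw [← Real.exp_lt_exp, exp_shift, Real.exp_add, exp_klog3,
    Real.exp_log (by positivity)]
  have h3 : ((3:ℝ)^k) * (1 + (3:ℝ)^(-(k:ℤ))) = 3^k + 1 := by
    rw [zpow_neg, zpow_natCast]; field_simp
  rw [h3]

lemma main_of_bounds {n : ℤ} (hn : 0 ≤ n) (M : ℕ) (hub : 2*n+1 ≤ 3^M)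
    (hlb : ∀ m, M = m+1 → (3:ℤ)^m < 2*n+1) (r : ℤ) (hr : r = M) :
    (∃ F : Finset ℤ, GeneratesAtLevel n F ∧ (F.card : ℤ) = r) ∧
    ∀ F : Finset ℤ, GeneratesAtLevel n F → r ≤ (F.card : ℤ) := by
  subst hr
  cases M with
  | zero =>
    have hn0 : n = 0 := by norm_num at hub; omega
    subst hn0
    exact ⟨⟨∅, gen_zero, by simp⟩, fun F _ => by positivity⟩
  | succ m =>
    have hlb' := hlb m rfl
    obtain ⟨F, hcard, hgen⟩ := exists_gen m n hlb' hub
    refine ⟨⟨F, hgen, by rw [hcard]⟩, fun F' hgen' => ?_⟩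
    have h1 := gen_lower hgen'
    have h2 : (3:ℤ)^m < 3^F'.card := lt_of_lt_of_le hlb' h1
    have h3 : m < F'.card := (pow_lt_pow_iff_right₀ (by norm_num : (1:ℤ) < 3)).mp h2
    push_cast; omega

theorem stmt7 (a : ℝ) (ha : -Real.log 2 ≤ a) :
    (∃ F : Finset ℤ, GeneratesAtLevel ⌊Real.exp a⌋ F ∧
      (F.card : ℤ) =
        ⌈(a + Real.log 2) / Real.log 3⌉ - (if a ∈ excL then 1 else 0)) ∧
    ∀ F : Finset ℤ, GeneratesAtLevel ⌊Real.exp a⌋ F →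
      ⌈(a + Real.log 2) / Real.log 3⌉ - (if a ∈ excL then 1 else 0) ≤
        (F.card : ℤ) := by
  have hlog3 := log3_pos
  have ha' : 0 ≤ a + Real.log 2 := by linarith
  set n : ℤ := ⌊Real.exp a⌋ with hn
  have hea_pos : (0:ℝ) < Real.exp a := Real.exp_pos a
  have hn0 : 0 ≤ n := Int.floor_nonneg.mpr hea_pos.le
  have hfloor_le : (n:ℝ) ≤ Real.exp a := Int.floor_le _
  have hlt : Real.exp a < (n:ℝ) + 1 := Int.lt_floor_add_one _
  set c : ℤ := ⌈(a + Real.log 2) / Real.log 3⌉ with hc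
  by_cases hL : a ∈ excL
  · simp only [hL, if_pos]
    obtain ⟨k, hk1, hk2⟩ := hL
    have hk1' : (3:ℝ)^k < 2 * Real.exp a := (conv1 a k).mp hk1
    have hk2' : 2 * Real.exp a < 3^k + 1 := (conv2 a k).mp hk2
    have hck : c = (k:ℤ) + 1 := by
      have hge : (k:ℤ) < c := by
        rw [hc]
        apply Int.lt_ceil.mpr
        rw [lt_div_iff₀ hlog3]
        push_cast
        exact hk1
      have hle : c ≤ (k:ℤ) + 1 := by
        rw [hc]
        apply Int.ceil_le.mpr
        rw [div_le_iff₀ hlog3]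
        have h31 : (1:ℝ) ≤ 3^k := one_le_pow₀ (by norm_num)
        have : 2 * Real.exp a ≤ 3^(k+1) := by
          have : ((3:ℝ)^(k+1)) = 3 * 3^k := by ring
          linarith [this]
        have := Real.log_le_log (by positivity) this
        rw [← exp_shift] at this
        rw [Real.log_exp] at this
        calc a + Real.log 2 ≤ Real.log (3^(k+1)) := this
          _ = (k+1) * Real.log 3 := by
              rw [Real.log_pow]; push_cast; ring
          _ = ((k:ℤ)+1 : ℤ) * Real.log 3 := by push_cast; ring
      omega
    have hub : 2*n+1 ≤ (3:ℤ)^k := by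
      have hr1 : (2*(n:ℝ)) < ((3:ℤ)^k : ℝ) + 1 := by push_cast; linarith
      have hi1 : 2*n < (3:ℤ)^k + 1 := by exact_mod_cast hr1
      have := odd_pow3 k
      omega
    have hlb : ∀ m, k = m+1 → (3:ℤ)^m < 2*n+1 := by
      intro m hm
      subst hm
      have hr1 : ((3:ℤ)^(m+1) : ℝ) < 2*(n:ℝ) + 2 := by push_cast; linarith
      have hi1 : (3:ℤ)^(m+1) < 2*n + 2 := by exact_mod_cast hr1
      have h3m : (1:ℤ) ≤ 3^m := one_le_pow₀ (by norm_num)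
      have : (3:ℤ)^(m+1) = 3*3^m := by ring
      omega
    exact main_of_bounds hn0 k hub hlb (c - 1) (by omega)
  · simp only [hL, if_neg, not_false_iff]
    have hc0 : 0 ≤ c := Int.ceil_nonneg (div_nonneg ha' hlog3.le)
    set M : ℕ := c.toNat with hM
    have hMc : (M:ℤ) = c := Int.toNat_of_nonneg hc0
    have hub : 2*n+1 ≤ (3:ℤ)^M := by
      have h1 : a + Real.log 2 ≤ (M:ℝ) * Real.log 3 := by
        have := Int.le_ceil ((a + Real.log 2) / Real.log 3)
        rw [← hc] at this
        rw [div_le_iff₀ hlog3] at this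
        calc a + Real.log 2 ≤ (c:ℝ) * Real.log 3 := this
          _ = (M:ℝ) * Real.log 3 := by rw [← hMc]; push_cast; ring
      have h2 : 2 * Real.exp a ≤ (3:ℝ)^M := by
        rw [← exp_shift, ← exp_klog3]
        exact Real.exp_le_exp.mpr h1
      have hr1 : 2*(n:ℝ) ≤ ((3:ℤ)^M : ℝ) := by push_cast; linarith
      have hi1 : 2*n ≤ (3:ℤ)^M := by exact_mod_cast hr1
      have := odd_pow3 M
      omega
    have hlb : ∀ m, M = m+1 → (3:ℤ)^m < 2*n+1 := by
      intro m hm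
      have hmc : (m:ℝ) * Real.log 3 < a + Real.log 2 := by
        have h1 : (c:ℝ) < (a + Real.log 2) / Real.log 3 + 1 := by
          rw [hc]; exact Int.ceil_lt_add_one _
        have h2 : ((c:ℝ) - 1) * Real.log 3 < a + Real.log 2 := by
          rw [sub_mul, one_mul]
          have := (lt_div_iff₀ hlog3).mp (by linarith : (c:ℝ) - 1 < (a + Real.log 2) / Real.log 3)
          linarith [this]
        have hcm : (c:ℝ) - 1 = (m:ℝ) := by
          have : (m:ℤ) = c - 1 := by omega
          exact_mod_cast this.symm
        rwa [hcm] at h2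
      have h3m : (3:ℝ)^m < 2 * Real.exp a := (conv1 a m).mp hmc
      have hr1 : ((3:ℤ)^m : ℝ) < 2*(n:ℝ) + 2 := by push_cast; linarith
      have hi1 : (3:ℤ)^m < 2*n + 2 := by exact_mod_cast hr1
      have hne : (3:ℤ)^m ≠ 2*n + 1 := by
        intro heq
        apply hL
        refine ⟨m, hmc, ?_⟩
        apply (conv2 a m).mpr
        have : ((3:ℤ)^m : ℝ) = 2*(n:ℝ) + 1 := by exact_mod_cast heq
        push_cast at this ⊢
        linarith
      omega
    have := main_of_bounds hn0 M hub hlb c hMc.symm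
    simpa using this
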